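/- For the determinant a(x,y)_{ij} built from the initial value problem, the entries of the inverse wave-matrix satisfy: \hat{w}_k^{*(∞)}(s) = det[a_{ij}]_{i=m,...,s-1,s+k; j=m,...,s} / det[a_{ij}]_{i,j=m,...,s}, and the generating sum \sum_{k=0}^{n-s-1} \lambda^k \hat{w}_k^{*(∞)}(s) = \tau(s+1, x+\epsilon(\lambda), y)/\tau(s+1,x,y), where \tau(s,x,y) = det[a_{ij}]_{m≤i,j≤s-1} and \epsilon(\lambda) = (\lambda, \lambda^2/2, ...). -/

import Mathlib

open Finset

/-- The upper shift matrix `Λ` with `Λ_{k,k+1} = 1`. -/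
def shiftU (d : ℕ) : Matrix (Fin d) (Fin d) ℂ :=
  Matrix.of fun i j => if (i : ℕ) + 1 = (j : ℕ) then 1 else 0

open Polynomial
open scoped Nat

lemma shiftU_pow_apply (d k : ℕ) (i j : Fin d) :
    (shiftU d ^ k) i j = if (i : ℕ) + k = (j : ℕ) then 1 else 0 := by
  induction k generalizing j with
  | zero => simp [Matrix.one_apply, Fin.ext_iff]
  | succ k ih =>
    rw [pow_succ, Matrix.mul_apply]
    simp only [ih]
    simp only [shiftU, Matrix.of_apply, ite_mul, one_mul, zero_mul]
    by_cases hd : (i : ℕ) + k < d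
    · have he : ∀ t : Fin d, ((i : ℕ) + k = (t : ℕ)) ↔ ((⟨(i : ℕ) + k, hd⟩ : Fin d) = t) := by
        intro t
        constructor
        · intro h; exact Fin.ext h
        · intro h; rw [← h]
      simp only [he]
      rw [Finset.sum_ite_eq]
      simp only [Finset.mem_univ, if_true]
      norm_num [add_assoc]
    · have h1 : ∀ t : Fin d, ¬ ((i : ℕ) + k = (t : ℕ)) := fun t h => hd (h ▸ t.isLt)
      have h2 : ¬ ((i : ℕ) + (k + 1) = (j : ℕ)) := fun h => hd (by omega)
      simp only [h1, if_false, Finset.sum_const_zero, h2]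

lemma shiftU_pow_d (d : ℕ) : shiftU d ^ d = 0 := by
  ext i j
  rw [shiftU_pow_apply]
  have : ¬ ((i : ℕ) + d = (j : ℕ)) := by omega
  simp [this]

lemma aeval_shiftU_apply (d : ℕ) (p : ℂ[X]) (i j : Fin d) :
    (Polynomial.aeval (shiftU d) p) i j =
      if (i : ℕ) ≤ (j : ℕ) then p.coeff ((j : ℕ) - (i : ℕ)) else 0 := by
  rw [Polynomial.aeval_eq_sum_range]
  rw [Matrix.sum_apply]
  simp only [Matrix.smul_apply, shiftU_pow_apply, smul_ite, smul_eq_mul, mul_one, mul_zero]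
  by_cases hle : (i : ℕ) ≤ (j : ℕ)
  · have he : ∀ k, ((i : ℕ) + k = (j : ℕ)) ↔ ((j : ℕ) - (i : ℕ) = k) := by omega
    simp only [he, hle, if_true, mul_ite, mul_one, mul_zero]
    rw [Finset.sum_ite_eq]
    split
    · rfl
    · next h =>
      rw [Finset.mem_range, not_lt] at h
      exact (Polynomial.coeff_eq_zero_of_natDegree_lt (by omega)).symm
  · have he : ∀ k, ¬ ((i : ℕ) + k = (j : ℕ)) := by omega
    simp [he, hle]
open scoped Nat

noncomputable def pP (d : ℕ) (l : ℂ) : ℂ[X] := ∑ k ∈ Icc 1 (d-1), C (l^k / k) * X^k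
noncomputable def qP (d : ℕ) (l : ℂ) : ℂ[X] := ∑ k ∈ range d, C (l^k) * X^k
noncomputable def eP (d : ℕ) (l : ℂ) : ℂ[X] :=
  ∑ n ∈ range (2*d), ((n ! : ℂ))⁻¹ • pP d l ^ n
noncomputable def uP (l : ℂ) : ℂ[X] := 1 - C l * X

lemma pP_coeff_zero (d : ℕ) (l : ℂ) : (pP d l).coeff 0 = 0 := by
  rw [pP, finset_sum_coeff]
  apply Finset.sum_eq_zero
  intro k hk
  rw [Finset.mem_Icc] at hk
  rw [coeff_C_mul, coeff_X_pow, if_neg (by omega), mul_zero]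

lemma qP_mul_uP (d : ℕ) (l : ℂ) : qP d l * uP l = 1 - C (l^d) * X^d := by
  rw [qP, uP, Finset.sum_mul]
  have h : ∀ k, C (l^k) * X^k * (1 - C l * X)
      = (fun k => C (l^k) * X^k) k - (fun k => C (l^k) * X^k) (k+1) := by
    intro k
    simp only [pow_succ, map_mul]
    ring
  rw [Finset.sum_congr rfl (fun k _ => h k), Finset.sum_range_sub']
  simp

lemma Icc_one_eq_Ico (d : ℕ) : Icc 1 (d-1) = Ico 1 d := by
  ext t; simp only [Finset.mem_Icc, Finset.mem_Ico]; omega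

lemma deriv_pP (d : ℕ) (l : ℂ) :
    derivative (pP d l) = ∑ j ∈ range (d-1), C (l^(1+j)) * X^j := by
  rw [pP, map_sum, Icc_one_eq_Ico, Finset.sum_Ico_eq_sum_range]
  apply Finset.sum_congr rfl
  intro j _
  rw [derivative_C_mul_X_pow]
  congr 1
  · congr 1
    have h1 : ((1 + j : ℕ) : ℂ) ≠ 0 := Nat.cast_ne_zero.mpr (by omega)
    rw [div_mul_cancel₀ _ h1]
  · simp

lemma uP_mul_deriv_pP (d : ℕ) (hd : 1 ≤ d) (l : ℂ) :
    uP l * derivative (pP d l) = C l - C (l^d) * X^(d-1) := by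
  rw [deriv_pP, Finset.mul_sum]
  have h : ∀ j, uP l * (C (l^(1+j)) * X^j)
      = (fun j => C (l^(1+j)) * X^j) j - (fun j => C (l^(1+j)) * X^j) (j+1) := by
    intro j
    simp only [uP, pow_succ, pow_add, map_mul, pow_one]
    ring
  rw [Finset.sum_congr rfl (fun j _ => h j), Finset.sum_range_sub']
  have h2 : 1 + (d-1) = d := by omega
  simp [h2]

noncomputable def E1P (d : ℕ) (l : ℂ) : ℂ[X] :=
  ∑ n ∈ range (2*d-1), ((n ! : ℂ))⁻¹ • pP d l ^ n

lemma deriv_eP (d : ℕ) (hd : 1 ≤ d) (l : ℂ) :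
    derivative (eP d l) = derivative (pP d l) * E1P d l := by
  rw [eP, map_sum]
  conv_lhs => rw [show 2*d = (2*d-1)+1 from by omega, Finset.sum_range_succ']
  have hz : derivative (((0 ! : ℂ))⁻¹ • pP d l ^ 0) = 0 := by simp
  rw [hz, add_zero, E1P, Finset.mul_sum]
  apply Finset.sum_congr rfl
  intro i _
  rw [derivative_smul, derivative_pow, Nat.add_sub_cancel]
  have hfac : C (((i+1)! : ℂ))⁻¹ * C ((i+1 : ℕ) : ℂ) = C ((i ! : ℂ))⁻¹ := by
    rw [← map_mul]
    congr 1
    rw [Nat.factorial_succ]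
    push_cast
    have h1 : ((i:ℂ) + 1) ≠ 0 := Nat.cast_add_one_ne_zero i
    have h2 : ((i ! : ℂ)) ≠ 0 := Nat.cast_ne_zero.mpr (Nat.factorial_ne_zero i)
    field_simp
  rw [Polynomial.smul_eq_C_mul, Polynomial.smul_eq_C_mul]
  linear_combination (pP d l ^ i * derivative (pP d l)) * hfac

lemma eP_eq (d : ℕ) (hd : 1 ≤ d) (l : ℂ) :
    eP d l = E1P d l + (((2*d-1)! : ℂ))⁻¹ • pP d l ^ (2*d-1) := by
  conv_lhs => rw [eP, show 2*d = (2*d-1)+1 from by omega, Finset.sum_range_succ]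
  rw [E1P]

lemma deriv_eP_uP_dvd (d : ℕ) (hd : 1 ≤ d) (l : ℂ) :
    X^(d-1) ∣ derivative (eP d l * uP l) := by
  rw [derivative_mul, deriv_eP d hd l]
  have hu' : derivative (uP l) = -C l := by simp [uP]
  rw [hu']
  have h1 : derivative (pP d l) * E1P d l * uP l = (C l - C (l^d) * X^(d-1)) * E1P d l := by
    rw [← uP_mul_deriv_pP d hd l]; ring
  rw [h1, eP_eq d hd l]
  have hXp : X^(d-1) ∣ pP d l ^ (2*d-1) :=
    dvd_trans (pow_dvd_pow X (by omega))
      (pow_dvd_pow_of_dvd (Polynomial.X_dvd_iff.mpr (pP_coeff_zero d l)) _)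
  obtain ⟨r, hr⟩ := hXp
  refine ⟨-(C (l^d) * E1P d l) + -C l * (C (((2*d-1)! : ℂ))⁻¹ * r), ?_⟩
  rw [hr, Polynomial.smul_eq_C_mul]
  ring

lemma key_dvd (d : ℕ) (hd : 1 ≤ d) (l : ℂ) : X^d ∣ (eP d l * uP l - 1) := by
  rw [Polynomial.X_pow_dvd_iff]
  intro m hm
  rcases m with _ | m
  · rw [coeff_sub, Polynomial.mul_coeff_zero]
    have hp0 : (pP d l).eval 0 = 0 := by
      rw [← Polynomial.coeff_zero_eq_eval_zero]; exact pP_coeff_zero d l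
    have he0 : (eP d l).coeff 0 = 1 := by
      rw [Polynomial.coeff_zero_eq_eval_zero, eP, Polynomial.eval_finset_sum,
        Finset.sum_eq_single_of_mem 0 (Finset.mem_range.mpr (by omega))]
      · simp
      · intro n _ hne
        simp [hp0, zero_pow hne]
    have hu0 : (uP l).coeff 0 = 1 := by simp [uP]
    simp [he0, hu0]
  · rw [coeff_sub, Polynomial.coeff_one, if_neg (by omega), sub_zero]
    have hdvd := deriv_eP_uP_dvd d hd l
    rw [Polynomial.X_pow_dvd_iff] at hdvd
    have h2 := hdvd m (by omega)
    rw [Polynomial.coeff_derivative] at h2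
    have hm1 : ((m : ℂ) + 1) ≠ 0 := Nat.cast_add_one_ne_zero m
    exact (mul_eq_zero.mp h2).resolve_right hm1


/-- `a(x,y) = exp(∑_k x_k Λ^k) · A · exp(-∑_k y_k (Λᵀ)^k)`. -/
noncomputable def amat (d : ℕ) (A : Matrix (Fin d) (Fin d) ℂ) (x y : ℕ → ℂ) :
    Matrix (Fin d) (Fin d) ℂ :=
  NormedSpace.exp (∑ k ∈ Finset.Icc 1 (d - 1), x k • (shiftU d) ^ k) * A *
    NormedSpace.exp (-∑ k ∈ Finset.Icc 1 (d - 1), y k • ((shiftU d).transpose) ^ k)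


lemma aeval_X_pow_mul (d : ℕ) (r : ℂ[X]) :
    Polynomial.aeval (shiftU d) (X^d * r) = 0 := by
  rw [map_mul, map_pow, Polynomial.aeval_X, shiftU_pow_d, zero_mul]

lemma exp_aeval_pP (d : ℕ) (l : ℂ) :
    NormedSpace.exp (Polynomial.aeval (shiftU d) (pP d l)) =
      Polynomial.aeval (shiftU d) (eP d l) := by
  rw [NormedSpace.exp_eq_tsum (𝕂 := ℂ)]
  have hvan : ∀ n ∉ Finset.range (2*d),
      ((n ! : ℂ))⁻¹ • (Polynomial.aeval (shiftU d) (pP d l)) ^ n = 0 := by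
    intro n hn
    rw [Finset.mem_range, not_lt] at hn
    have hdvd : X^d ∣ pP d l ^ n :=
      dvd_trans (pow_dvd_pow X (by omega))
        (pow_dvd_pow_of_dvd (Polynomial.X_dvd_iff.mpr (pP_coeff_zero d l)) n)
    obtain ⟨r, hr⟩ := hdvd
    rw [← map_pow, hr, aeval_X_pow_mul, smul_zero]
  beta_reduce
  rw [tsum_eq_sum hvan, eP, map_sum]
  apply Finset.sum_congr rfl
  intro n _
  rw [map_smul, map_pow]

lemma aeval_eP_eq_qP (d : ℕ) (hd : 1 ≤ d) (l : ℂ) :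
    Polynomial.aeval (shiftU d) (eP d l) = Polynomial.aeval (shiftU d) (qP d l) := by
  have h1 : Polynomial.aeval (shiftU d) (eP d l) * Polynomial.aeval (shiftU d) (uP l) = 1 := by
    rw [← map_mul]
    obtain ⟨r, hr⟩ := key_dvd d hd l
    have h : eP d l * uP l = 1 + X^d * r := by linear_combination hr
    rw [h, map_add, map_one, aeval_X_pow_mul, add_zero]
  have h2 : Polynomial.aeval (shiftU d) (uP l) * Polynomial.aeval (shiftU d) (qP d l) = 1 := by
    rw [← map_mul, mul_comm (uP l), qP_mul_uP]
    have h : (1 : ℂ[X]) - C (l^d) * X^d = 1 + X^d * (-C (l^d)) := by ring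
    rw [h, map_add, map_one, aeval_X_pow_mul, add_zero]
  calc Polynomial.aeval (shiftU d) (eP d l)
      = Polynomial.aeval (shiftU d) (eP d l) *
        (Polynomial.aeval (shiftU d) (uP l) * Polynomial.aeval (shiftU d) (qP d l)) := by
        rw [h2, mul_one]
    _ = (Polynomial.aeval (shiftU d) (eP d l) * Polynomial.aeval (shiftU d) (uP l)) *
        Polynomial.aeval (shiftU d) (qP d l) := by rw [mul_assoc]
    _ = Polynomial.aeval (shiftU d) (qP d l) := by rw [h1, one_mul]

lemma qP_coeff (d m : ℕ) (l : ℂ) (hm : m < d) : (qP d l).coeff m = l^m := by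
  rw [qP, finset_sum_coeff,
    Finset.sum_eq_single_of_mem m (Finset.mem_range.mpr hm)]
  · rw [coeff_C_mul, coeff_X_pow, if_pos rfl, mul_one]
  · intro k _ hk
    rw [coeff_C_mul, coeff_X_pow, if_neg (fun h => hk h.symm), mul_zero]

lemma aeval_qP_apply (d : ℕ) (l : ℂ) (i j : Fin d) :
    Polynomial.aeval (shiftU d) (qP d l) i j
      = if (i : ℕ) ≤ (j : ℕ) then l^((j : ℕ)-(i : ℕ)) else 0 := by
  rw [aeval_shiftU_apply]
  split
  · rw [qP_coeff d _ l (by omega)]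
  · rfl

lemma aeval_C_mul_X_pow (d k : ℕ) (c : ℂ) :
    Polynomial.aeval (shiftU d) (C c * X^k) = c • shiftU d ^ k := by
  rw [map_mul, Polynomial.aeval_C, map_pow, Polynomial.aeval_X, ← Algebra.smul_def]

lemma amat_shift (d : ℕ) (hd : 1 ≤ d) (A : Matrix (Fin d) (Fin d) ℂ) (x y : ℕ → ℂ) (l : ℂ) :
    amat d A (fun k => x k + l ^ k / (k : ℂ)) y =
      Polynomial.aeval (shiftU d) (qP d l) * amat d A x y := by
  rw [amat, amat]
  have hsum : ∑ k ∈ Finset.Icc 1 (d-1), (x k + l^k/(k : ℂ)) • shiftU d ^ k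
      = Polynomial.aeval (shiftU d) (pP d l) +
        Polynomial.aeval (shiftU d) (∑ k ∈ Finset.Icc 1 (d-1), C (x k) * X^k) := by
    rw [pP, map_sum, map_sum, ← Finset.sum_add_distrib]
    apply Finset.sum_congr rfl
    intro k _
    rw [aeval_C_mul_X_pow, aeval_C_mul_X_pow, add_smul, add_comm]
  have hsx : Polynomial.aeval (shiftU d) (∑ k ∈ Finset.Icc 1 (d-1), C (x k) * X^k)
      = ∑ k ∈ Finset.Icc 1 (d-1), x k • shiftU d ^ k := by
    rw [map_sum]
    exact Finset.sum_congr rfl fun k _ => aeval_C_mul_X_pow d k (x k)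
  have hcomm : Commute (Polynomial.aeval (shiftU d) (pP d l))
      (Polynomial.aeval (shiftU d) (∑ k ∈ Finset.Icc 1 (d-1), C (x k) * X^k)) := by
    show _ * _ = _ * _
    rw [← map_mul, ← map_mul, mul_comm]
  rw [hsum, Matrix.exp_add_of_commute _ _ hcomm, exp_aeval_pP, aeval_eP_eq_qP d hd l, hsx,
    mul_assoc, mul_assoc, mul_assoc]


/-- `a(x,y)` extended by zero to all of `ℕ × ℕ`. -/
noncomputable def abar (d : ℕ) (A : Matrix (Fin d) (Fin d) ℂ) (x y : ℕ → ℂ)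
    (i j : ℕ) : ℂ :=
  if h : i < d ∧ j < d then amat d A x y ⟨i, h.1⟩ ⟨j, h.2⟩ else 0


lemma abar_zero (d : ℕ) (A : Matrix (Fin d) (Fin d) ℂ) (x y : ℕ → ℂ) (i j : ℕ)
    (h : d ≤ i) : abar d A x y i j = 0 := by
  rw [abar, dif_neg]
  rintro ⟨h1, -⟩; omega

lemma abar_shift (d : ℕ) (hd : 1 ≤ d) (A : Matrix (Fin d) (Fin d) ℂ) (x y : ℕ → ℂ)
    (l : ℂ) (i j : ℕ) :
    abar d A (fun k => x k + l ^ k / (k : ℂ)) y i j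
      = ∑ k ∈ Finset.range d, l^k * abar d A x y (i+k) j := by
  by_cases h : i < d ∧ j < d
  · rw [abar, dif_pos h, amat_shift d hd A x y l, Matrix.mul_apply]
    have hterm : ∀ t : Fin d, Polynomial.aeval (shiftU d) (qP d l) ⟨i, h.1⟩ t *
        amat d A x y t ⟨j, h.2⟩
        = (fun u : ℕ => (if i ≤ u then l^(u-i) else 0) * abar d A x y u j) (t : ℕ) := by
      intro t
      rw [aeval_qP_apply]
      simp only [abar, dif_pos (show (t : ℕ) < d ∧ j < d from ⟨t.isLt, h.2⟩)]
    rw [Finset.sum_congr rfl (fun t _ => hterm t),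
      Fin.sum_univ_eq_sum_range
        (fun u : ℕ => (if i ≤ u then l^(u-i) else 0) * abar d A x y u j) d]
    have hIco : ∑ u ∈ Finset.range d, (if i ≤ u then l^(u-i) else 0) * abar d A x y u j
        = ∑ u ∈ Finset.Ico i d, (if i ≤ u then l^(u-i) else 0) * abar d A x y u j := by
      symm
      apply Finset.sum_subset
      · intro u hu
        rw [Finset.mem_Ico] at hu
        exact Finset.mem_range.mpr hu.2
      · intro u hu hnu
        rw [Finset.mem_range] at hu
        rw [Finset.mem_Ico, not_and] at hnu
        rw [if_neg (fun hle => (hnu hle) hu), zero_mul]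
    rw [hIco, Finset.sum_congr rfl (fun u hu => by
      rw [if_pos (Finset.mem_Ico.mp hu).1]), Finset.sum_Ico_eq_sum_range]
    simp only [Nat.add_sub_cancel_left]
    apply Finset.sum_subset (Finset.range_subset_range.mpr (by omega))
    intro k hk hnk
    rw [Finset.mem_range, not_lt] at hnk
    rw [abar_zero d A x y (i+k) j (by omega), mul_zero]
  · rw [abar, dif_neg h]
    symm
    apply Finset.sum_eq_zero
    intro k _
    rcases not_and_or.mp h with h1 | h2
    · rw [abar_zero d A x y (i+k) j (by omega), mul_zero]
    · rw [abar, dif_neg (fun hc => h2 hc.2), mul_zero]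

noncomputable def NN (s d : ℕ) (l : ℂ) (B : ℕ → ℕ → ℂ) (t : ℕ) :
    Matrix (Fin (s+1)) (Fin (s+1)) ℂ :=
  Matrix.of fun i j =>
    if (i : ℕ) < t then B i j else ∑ k ∈ Finset.range d, l^k * B ((i : ℕ)+k) (j : ℕ)

lemma NN_apply (s d : ℕ) (l : ℂ) (B : ℕ → ℕ → ℂ) (t : ℕ) (i j : Fin (s+1)) :
    NN s d l B t i j =
      if (i : ℕ) < t then B i j else ∑ k ∈ Finset.range d, l^k * B ((i : ℕ)+k) (j : ℕ) :=
  rfl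

lemma det_updateRow_finset_sum {n : ℕ} (M : Matrix (Fin n) (Fin n) ℂ) (r : Fin n)
    {ι : Type} (s : Finset ι) (f : ι → Fin n → ℂ) :
    (M.updateRow r (∑ k ∈ s, f k)).det = ∑ k ∈ s, (M.updateRow r (f k)).det := by
  induction s using Finset.cons_induction with
  | empty =>
    simp only [Finset.sum_empty]
    apply Matrix.det_eq_zero_of_row_eq_zero r
    intro j
    rw [Matrix.updateRow_self]
    rfl
  | cons a s ha ih =>
    rw [Finset.sum_cons, Matrix.det_updateRow_add, ih, Finset.sum_cons]

lemma det_rows_expand (s d : ℕ) (hs : s + 1 ≤ d) (l : ℂ) (B : ℕ → ℕ → ℂ)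
    (hB : ∀ i j : ℕ, d ≤ i → B i j = 0) :
    (Matrix.det fun i j : Fin (s+1) => ∑ k ∈ Finset.range d, l^k * B ((i:ℕ)+k) (j:ℕ))
      = ∑ k ∈ Finset.range (d - s), l^k *
          Matrix.det (fun i j : Fin (s+1) => B (if (i:ℕ) < s then (i:ℕ) else s+k) (j:ℕ)) := by
  have hd : 1 ≤ d := by omega
  have hrowid : ∀ t j : ℕ, ∑ k ∈ Finset.range d, l^k * B (t+k) j
      = B t j + l * ∑ k ∈ Finset.range d, l^k * B (t+1+k) j := by
    intro t j
    have h1 : ∑ k ∈ Finset.range d, l^k * B (t+k) j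
        = (∑ k ∈ Finset.range (d-1), l^(k+1) * B (t+(k+1)) j) + l^0 * B (t+0) j := by
      conv_lhs => rw [show d = (d-1)+1 from by omega, Finset.sum_range_succ']
    have h2 : ∑ k ∈ Finset.range d, l^k * B (t+1+k) j
        = ∑ k ∈ Finset.range (d-1), l^k * B (t+1+k) j := by
      symm
      apply Finset.sum_subset (Finset.range_subset_range.mpr (by omega))
      intro k _ hk
      rw [Finset.mem_range, not_lt] at hk
      rw [hB (t+1+k) j (by omega), mul_zero]
    rw [h1, h2, Finset.mul_sum, add_comm]
    congr 1
    · simp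
    apply Finset.sum_congr rfl
    intro k _
    rw [show t + (k+1) = t+1+k from by omega]
    ring
  have hstep : ∀ t, t < s → (NN s d l B t).det = (NN s d l B (t+1)).det := by
    intro t ht
    have hne : (⟨t, by omega⟩ : Fin (s+1)) ≠ ⟨t+1, by omega⟩ := by
      intro hc
      simp only [Fin.mk.injEq] at hc
      omega
    have hN_eq : NN s d l B t = Matrix.updateRow (NN s d l B (t+1)) ⟨t, by omega⟩
        ((NN s d l B (t+1)) ⟨t, by omega⟩ + l • (NN s d l B (t+1)) ⟨t+1, by omega⟩) := by
      ext i j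
      rw [Matrix.updateRow_apply]
      by_cases hi : i = (⟨t, by omega⟩ : Fin (s+1))
      · rw [if_pos hi, hi]
        simp only [NN_apply, Pi.add_apply, Pi.smul_apply, smul_eq_mul]
        rw [if_neg (lt_irrefl t), if_pos (Nat.lt_succ_self t), if_neg (lt_irrefl (t+1))]
        exact hrowid t j
      · rw [if_neg hi]
        simp only [NN_apply]
        have hne2 : (i : ℕ) ≠ t := by
          intro hc
          exact hi (Fin.ext hc)
        by_cases h2 : (i : ℕ) < t
        · rw [if_pos h2, if_pos (by omega)]
        · rw [if_neg h2, if_neg (by omega)]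
    rw [hN_eq]
    exact Matrix.det_updateRow_add_smul_self _ hne l
  have hiter : ∀ t, t ≤ s → (NN s d l B (s-t)).det = (NN s d l B s).det := by
    intro t
    induction t with
    | zero => intro _; rw [Nat.sub_zero]
    | succ t ih =>
      intro h
      have h1 : (NN s d l B (s-(t+1))).det = (NN s d l B (s-(t+1)+1)).det :=
        hstep _ (by omega)
      rw [show s-(t+1)+1 = s-t from by omega] at h1
      rw [h1]
      exact ih (by omega)
  have h0 : (NN s d l B 0).det = (NN s d l B s).det := by
    have h := hiter s le_rfl
    rw [Nat.sub_self] at h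
    exact h
  have hupA : NN s d l B s = Matrix.updateRow (NN s d l B s) ⟨s, by omega⟩
      (∑ k ∈ Finset.range (d-s), fun j : Fin (s+1) => l^k * B (s+k) (j:ℕ)) := by
    ext i j
    rw [Matrix.updateRow_apply]
    by_cases hi : i = (⟨s, by omega⟩ : Fin (s+1))
    · rw [if_pos hi, hi, Finset.sum_apply]
      simp only [NN_apply]
      rw [if_neg (lt_irrefl s)]
      symm
      apply Finset.sum_subset (Finset.range_subset_range.mpr (by omega))
      intro k _ hk
      rw [Finset.mem_range, not_lt] at hk
      rw [hB (s+k) j (by omega), mul_zero]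
    · rw [if_neg hi]
  have hfinal : (NN s d l B s).det = ∑ k ∈ Finset.range (d-s), l^k *
      Matrix.det (fun i j : Fin (s+1) => B (if (i:ℕ) < s then (i:ℕ) else s+k) (j:ℕ)) := by
    conv_lhs => rw [hupA]
    rw [det_updateRow_finset_sum]
    apply Finset.sum_congr rfl
    intro k _
    have hsm : (fun j : Fin (s+1) => l^k * B (s+k) (j:ℕ))
        = l^k • (fun j : Fin (s+1) => B (s+k) (j:ℕ)) := rfl
    rw [hsm, Matrix.det_updateRow_smul]
    congr 1
    have hmx : Matrix.updateRow (NN s d l B s) (⟨s, by omega⟩ : Fin (s+1))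
        (fun j : Fin (s+1) => B (s+k) (j:ℕ))
        = (fun i j : Fin (s+1) => B (if (i:ℕ) < s then (i:ℕ) else s+k) (j:ℕ)) := by
      ext i j
      rw [Matrix.updateRow_apply]
      by_cases hi : i = (⟨s, by omega⟩ : Fin (s+1))
      · rw [if_pos hi, hi]
        rw [if_neg (lt_irrefl s)]
      · rw [if_neg hi]
        have hlt : (i : ℕ) < s := by
          have h1 := i.isLt
          have hne2 : (i : ℕ) ≠ s := by
            intro hc
            exact hi (Fin.ext hc)
          omega
        simp only [NN_apply, if_pos hlt]
    rw [hmx]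
  have hstart : (Matrix.det fun i j : Fin (s+1) =>
      ∑ k ∈ Finset.range d, l^k * B ((i:ℕ)+k) (j:ℕ)) = (NN s d l B 0).det := by
    have hfun : (fun i j : Fin (s+1) => ∑ k ∈ Finset.range d, l^k * B ((i:ℕ)+k) (j:ℕ))
        = NN s d l B 0 := by
      ext i j
      rw [NN_apply, if_neg (Nat.not_lt_zero _)]
    rw [hfun]
  rw [hstart, h0, hfinal]


/-- The tau-function `τ(s,x,y) = det[a_{ij}(x,y)]` over the leading `s × s` block. -/
noncomputable def tauF (d : ℕ) (A : Matrix (Fin d) (Fin d) ℂ) (x y : ℕ → ℂ) (s : ℕ) : ℂ :=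
  Matrix.det fun i j : Fin s => abar d A x y i j

/-- The inverse wave-matrix entry
`ŵ*^{(∞)}_k(s) = det[a_{ij}]_{i = 0,…,s-1, s+k; j = 0,…,s} / det[a_{ij}]_{i,j = 0,…,s}`
(indices written 0-based). -/
noncomputable def wstarInf (d : ℕ) (A : Matrix (Fin d) (Fin d) ℂ) (x y : ℕ → ℂ)
    (s k : ℕ) : ℂ :=
  (Matrix.det fun i j : Fin (s + 1) =>
      abar d A x y (if (i : ℕ) < s then (i : ℕ) else s + k) (j : ℕ)) /
    tauF d A x y (s + 1)

/-- The generating sum of the inverse wave-matrix entries is a Miwa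
shift of the tau-function:
`∑_{k=0}^{d-s-1} λ^k ŵ*^{(∞)}_k(s) = τ(s+1, x + ε(λ), y) / τ(s+1, x, y)`,
where `ε(λ) = (λ, λ²/2, λ³/3, …)`. -/
theorem wstar_generating_sum (d s : ℕ) (hs : s + 1 ≤ d)
    (A : Matrix (Fin d) (Fin d) ℂ) (x y : ℕ → ℂ) (l : ℂ)
    (hτ : tauF d A x y (s + 1) ≠ 0) :
    ∑ k ∈ Finset.range (d - s), l ^ k * wstarInf d A x y s k =
      tauF d A (fun k => x k + l ^ k / (k : ℂ)) y (s + 1) / tauF d A x y (s + 1) := by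
  have hd : 1 ≤ d := by omega
  have hτ' : tauF d A (fun k => x k + l ^ k / (k : ℂ)) y (s+1)
      = ∑ k ∈ Finset.range (d - s), l^k *
          Matrix.det (fun i j : Fin (s+1) =>
            abar d A x y (if (i:ℕ) < s then (i:ℕ) else s+k) (j:ℕ)) := by
    rw [tauF]
    have hfun : (fun i j : Fin (s+1) => abar d A (fun k => x k + l^k/(k : ℂ)) y i j)
        = fun i j : Fin (s+1) => ∑ k ∈ Finset.range d, l^k * abar d A x y ((i:ℕ)+k) (j:ℕ) := by
      ext i j
      exact abar_shift d hd A x y l i j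
    rw [hfun]
    exact det_rows_expand s d hs l (abar d A x y) (fun i j h => abar_zero d A x y i j h)
  rw [hτ', Finset.sum_div]
  apply Finset.sum_congr rfl
  intro k _
  rw [wstarInf, mul_div_assoc]
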